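/- (Inequality (2.3)): Fix ω ∈ (0,1), a nondecreasing sequence of positive reals a = (a_k)_{k≥1} and positive reals b = (b_k)_{k≥1} with b_* := inf_k b_k > 0. For τ₀ > 0 set M_{τ₀} := 2·Σ_{j=1}^∞ ω^{τ₀ a_1 (j^{b_*}−1)} (a finite quantity). Then for every τ with τ > τ₀ and every d ∈ ℕ: ln 2 · Σ_{k=1}^d ω^{τ a_k} ≤ ln( Σ_{h∈ℤ^d} ω_h^τ ) ≤ M_{τ₀} · Σ_{k=1}^d ω^{τ a_k}, where ω_h := ω^{Σ_{k=1}^d a_k|h_k|^{b_k}} and the family (ω_h^τ)_{h∈ℤ^d} is summable. -/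

import Mathlib

noncomputable section

/-- The exponent sum `∑_{k=1}^d a_k |h_k|^{b_k}` (0-indexed sequences). -/
def korSum (a b : ℕ → ℝ) (d : ℕ) (h : Fin d → ℤ) : ℝ :=
  ∑ k : Fin d, a k.1 * (|h k| : ℝ) ^ (b k.1)

/-- The eigenvalue `ω_h = ω^{∑_{k=1}^d a_k |h_k|^{b_k}}`. -/
def wfun (ω : ℝ) (a b : ℕ → ℝ) (d : ℕ) (h : Fin d → ℤ) : ℝ :=
  ω ^ (korSum a b d h)

open Real Filter

-- summability of j ↦ ω^(c j^β) over ℕ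
lemma aux_nat_summable {ω : ℝ} (hω0 : 0 < ω) (hω1 : ω < 1) {c β : ℝ} (hc : 0 < c) (hβ : 0 < β) :
    Summable (fun j : ℕ => ω ^ (c * (j : ℝ) ^ β)) := by
  have hlog : Real.log ω < 0 := Real.log_neg hω0 hω1
  have hA : 0 < -(c * Real.log ω) := by nlinarith
  have h1 : (fun x : ℝ => Real.exp (-(-(c * Real.log ω)) * x)) =o[atTop]
      fun x : ℝ => x ^ (-2 / β) := isLittleO_exp_neg_mul_rpow_atTop hA _
  have h2 := h1.comp_tendsto (tendsto_rpow_atTop hβ)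
  have h2' : (fun x : ℝ => Real.exp (c * Real.log ω * x ^ β)) =o[atTop]
      fun x : ℝ => x ^ (-2 : ℝ) := by
    refine h2.congr' ?_ ?_
    · filter_upwards with x
      simp only [Function.comp_apply, neg_neg]
    · filter_upwards [eventually_ge_atTop (0 : ℝ)] with x hx
      simp only [Function.comp_apply]
      rw [← Real.rpow_mul hx]
      congr 1
      field_simp
  have h3 := h2'.comp_tendsto tendsto_natCast_atTop_atTop
  have hsum2 : Summable (fun n : ℕ => ((n : ℝ)) ^ (-2 : ℝ)) :=
    Real.summable_nat_rpow.mpr (by norm_num)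
  have h4 : Summable (fun n : ℕ => Real.exp (c * Real.log ω * (n : ℝ) ^ β)) :=
    summable_of_isBigO_nat hsum2 h3.isBigO
  refine h4.congr fun n => ?_
  rw [Real.rpow_def_of_pos hω0]
  ring_nf

lemma aux_shift_summable {ω : ℝ} (hω0 : 0 < ω) (hω1 : ω < 1) {c β : ℝ} (hc : 0 < c) (hβ : 0 < β) :
    Summable (fun j : ℕ => ω ^ (c * ((j : ℝ) + 1) ^ β)) := by
  have := (summable_nat_add_iff 1).mpr (aux_nat_summable hω0 hω1 hc hβ)
  refine this.congr fun n => ?_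
  push_cast
  ring_nf

lemma aux_int_summable {ω : ℝ} (hω0 : 0 < ω) (hω1 : ω < 1) {c β : ℝ} (hc : 0 < c) (hβ : 0 < β) :
    Summable (fun n : ℤ => ω ^ (c * |(n : ℝ)| ^ β)) := by
  refine Summable.of_nat_of_neg ?_ ?_ <;>
  · refine (aux_nat_summable hω0 hω1 hc hβ).congr fun n => ?_
    push_cast
    simp [abs_neg, Nat.abs_cast]

lemma per_coord {ω : ℝ} (hω0 : 0 < ω) (hω1 : ω < 1) {c β B c₀ : ℝ}
    (hc : 0 < c) (hβ : 0 < β) (hB : 0 < B) (hBβ : B ≤ β) (hc₀ : 0 < c₀) (hcc : c₀ ≤ c) :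
    0 < (∑' n : ℤ, ω ^ (c * |(n : ℝ)| ^ β)) ∧
    Real.log 2 * ω ^ c ≤ Real.log (∑' n : ℤ, ω ^ (c * |(n : ℝ)| ^ β)) ∧
    Real.log (∑' n : ℤ, ω ^ (c * |(n : ℝ)| ^ β)) ≤
      (2 * ∑' j : ℕ, ω ^ (c₀ * (((j : ℝ) + 1) ^ B - 1))) * ω ^ c := by
  set f : ℤ → ℝ := fun n => ω ^ (c * |(n : ℝ)| ^ β) with hf
  have hfsum : Summable f := aux_int_summable hω0 hω1 hc hβ
  set S := ∑' n : ℤ, f n with hSdef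
  have hx0 : (0 : ℝ) < ω ^ c := Real.rpow_pos_of_pos hω0 _
  have hx1 : ω ^ c ≤ 1 := Real.rpow_le_one hω0.le hω1.le hc.le
  have hf0 : f 0 = 1 := by simp [hf, Real.zero_rpow hβ.ne']
  have hf1 : f 1 = ω ^ c := by norm_num [hf]
  have hlow : 1 + ω ^ c ≤ S := by
    have h2 : ∑ i ∈ ({0, 1} : Finset ℤ), f i = 1 + ω ^ c := by
      rw [Finset.sum_insert (by norm_num), Finset.sum_singleton, hf0, hf1]
    calc 1 + ω ^ c = ∑ i ∈ ({0, 1} : Finset ℤ), f i := h2.symm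
      _ ≤ S := hfsum.sum_le_tsum _ (fun i _ => Real.rpow_nonneg hω0.le _)
  have hSpos : 0 < S := lt_of_lt_of_le (by linarith) hlow
  refine ⟨hSpos, ?_, ?_⟩
  · have hcon := strictConcaveOn_log_Ioi.concaveOn.2 (Set.mem_Ioi.mpr one_pos)
      (Set.mem_Ioi.mpr two_pos) (by linarith : (0:ℝ) ≤ 1 - ω ^ c) hx0.le (by ring)
    simp only [smul_eq_mul, Real.log_one, mul_zero, mul_one, zero_add] at hcon
    have h15 : 1 - ω ^ c + ω ^ c * 2 = 1 + ω ^ c := by ring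
    rw [h15] at hcon
    calc Real.log 2 * ω ^ c = ω ^ c * Real.log 2 := by ring
      _ ≤ Real.log (1 + ω ^ c) := hcon
      _ ≤ Real.log S := Real.log_le_log (by linarith) hlow
  · set Mh := ∑' j : ℕ, ω ^ (c₀ * (((j : ℝ) + 1) ^ B - 1)) with hMh
    have hMsum : Summable (fun j : ℕ => ω ^ (c₀ * (((j : ℝ) + 1) ^ B - 1))) := by
      have := (aux_shift_summable hω0 hω1 hc₀ hB).mul_left (ω ^ (-c₀))
      refine this.congr fun j => ?_
      rw [← Real.rpow_add hω0]
      congr 1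
      ring
    have hMnonneg : 0 ≤ Mh := tsum_nonneg fun j => Real.rpow_nonneg hω0.le _
    have hpos_sum : Summable (fun j : ℕ => f ((j : ℤ) + 1)) :=
      hfsum.comp_injective (i := fun j : ℕ => (j : ℤ) + 1) (fun x y h => by simpa using h)
    have hneg_eq : (fun j : ℕ => f (-((j : ℤ) + 1))) = fun j : ℕ => f ((j : ℤ) + 1) := by
      funext j
      simp only [hf]
      rw [show |((-((j : ℤ) + 1) : ℤ) : ℝ)| = |(((j : ℤ) + 1 : ℤ) : ℝ)| by push_cast; rw [abs_neg]]
    have hneg_sum : Summable (fun j : ℕ => f (-((j : ℤ) + 1))) := by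
      rw [hneg_eq]; exact hpos_sum
    have hTle : (∑' j : ℕ, f ((j : ℤ) + 1)) ≤ ω ^ c * Mh := by
      have hterm : ∀ j : ℕ, f ((j : ℤ) + 1) ≤ ω ^ c * ω ^ (c₀ * (((j : ℝ) + 1) ^ B - 1)) := by
        intro j
        rw [← Real.rpow_add hω0]
        have habs : |((((j : ℤ)) + 1 : ℤ) : ℝ)| = (j : ℝ) + 1 := by
          push_cast
          rw [abs_of_nonneg (by positivity)]
        have hgoal : f ((j : ℤ) + 1) = ω ^ (c * ((j : ℝ) + 1) ^ β) := by
          simp only [hf]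
          rw [show (((j : ℤ) + 1 : ℤ) : ℝ) = (j : ℝ) + 1 by push_cast; ring] at *
          rw [abs_of_nonneg (by positivity : (0:ℝ) ≤ (j : ℝ) + 1)]
        rw [hgoal]
        apply Real.rpow_le_rpow_of_exponent_ge hω0 hω1.le
        have hb1 : (1 : ℝ) ≤ (j : ℝ) + 1 := le_add_of_nonneg_left (Nat.cast_nonneg j)
        have hBb : ((j : ℝ) + 1) ^ B ≤ ((j : ℝ) + 1) ^ β :=
          Real.rpow_le_rpow_of_exponent_le hb1 hBβ
        have h1B : (1 : ℝ) ≤ ((j : ℝ) + 1) ^ B := by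
          simpa using Real.rpow_le_rpow_of_exponent_le hb1 hB.le
        have hkey : c₀ * (((j : ℝ) + 1) ^ B - 1) ≤ c * (((j : ℝ) + 1) ^ β - 1) :=
          mul_le_mul hcc (by linarith) (by linarith) hc.le
        nlinarith
      calc (∑' j : ℕ, f ((j : ℤ) + 1))
          ≤ ∑' j : ℕ, ω ^ c * ω ^ (c₀ * (((j : ℝ) + 1) ^ B - 1)) :=
            hpos_sum.tsum_le_tsum hterm (hMsum.mul_left _)
        _ = ω ^ c * Mh := tsum_mul_left
    have hsplit : S = (∑' j : ℕ, f ((j : ℤ) + 1)) + f 0 + ∑' j : ℕ, f (-((j : ℤ) + 1)) :=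
      tsum_of_add_one_of_neg_add_one hpos_sum hneg_sum
    have hSle : S ≤ 1 + 2 * (ω ^ c * Mh) := by
      rw [hsplit, hneg_eq, hf0]
      linarith
    have hlog := Real.log_le_sub_one_of_pos hSpos
    calc Real.log S ≤ S - 1 := hlog
      _ ≤ 2 * (ω ^ c * Mh) := by linarith
      _ = (2 * Mh) * ω ^ c := by ring

set_option maxHeartbeats 800000 in
lemma pi_prod_tsum : ∀ (d : ℕ) (G : Fin d → ℤ → ℝ), (∀ k n, 0 ≤ G k n) → (∀ k, Summable (G k)) →
    Summable (fun h : Fin d → ℤ => ∏ k, G k (h k)) ∧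
      (∑' h : Fin d → ℤ, ∏ k, G k (h k)) = ∏ k, ∑' n : ℤ, G k n := by
  intro d
  induction d with
  | zero =>
    intro G _ _
    haveI : Unique (Fin 0 → ℤ) := ⟨⟨fun i => i.elim0⟩, fun f => funext fun i => i.elim0⟩
    constructor
    · exact .of_finite
    · rw [tsum_eq_single default (fun b hb => absurd (Subsingleton.elim b default) hb)]
      simp
  | succ d ih =>
    intro G hGpos hGsum
    obtain ⟨ih1, ih2⟩ := ih (fun k => G k.succ) (fun k n => hGpos k.succ n)
      (fun k => hGsum k.succ)
    set e : ℤ × (Fin d → ℤ) ≃ (Fin (d + 1) → ℤ) := Fin.consEquiv (fun _ => ℤ) with he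
    have hkey : ∀ p : ℤ × (Fin d → ℤ),
        (∏ k : Fin (d + 1), G k (e p k)) = G 0 p.1 * ∏ k : Fin d, G k.succ (p.2 k) := by
      intro p
      rw [Fin.prod_univ_succ]
      simp [he, Fin.consEquiv]
    have ih1' : Summable (fun h : Fin d → ℤ => ∏ k : Fin d, G k.succ (h k)) := ih1
    have ih2' : (∑' h : Fin d → ℤ, ∏ k : Fin d, G k.succ (h k)) = ∏ k : Fin d, ∑' n : ℤ, G k.succ n := ih2
    have hP : Summable (fun p : ℤ × (Fin d → ℤ) => G 0 p.1 * ∏ k : Fin d, G k.succ (p.2 k)) :=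
      Summable.mul_of_nonneg (f := G 0)
        (g := fun h : Fin d → ℤ => ∏ k : Fin d, G k.succ (h k)) (hGsum 0) ih1'
        (fun n => hGpos 0 n) (fun g => Finset.prod_nonneg fun k _ => hGpos k.succ _)
    have hSummable : Summable (fun h : Fin (d + 1) → ℤ => ∏ k, G k (h k)) := by
      rw [← e.summable_iff]
      exact hP.congr fun p => (hkey p).symm
    refine ⟨hSummable, ?_⟩
    calc (∑' h : Fin (d + 1) → ℤ, ∏ k, G k (h k))
        = ∑' p : ℤ × (Fin d → ℤ), ∏ k : Fin (d + 1), G k (e p k) :=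
          (e.tsum_eq (fun h => ∏ k, G k (h k))).symm
      _ = ∑' p : ℤ × (Fin d → ℤ), G 0 p.1 * ∏ k : Fin d, G k.succ (p.2 k) := by
          exact tsum_congr hkey
      _ = (∑' n : ℤ, G 0 n) * ∑' g : Fin d → ℤ, ∏ k : Fin d, G k.succ (g k) :=
          (Summable.tsum_mul_tsum (f := G 0) (g := fun h : Fin d → ℤ => ∏ k : Fin d, G k.succ (h k)) (hGsum 0) ih1' hP).symm
      _ = ∏ k : Fin (d + 1), ∑' n : ℤ, G k n := by
          rw [ih2', Fin.prod_univ_succ]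

/-- Inequality (2.3): with `M_{τ₀} = 2 ∑_{j=1}^∞ ω^{τ₀ a_1 (j^{b_*}−1)}` and
`b_* = inf_k b_k`, for every `τ > τ₀` and every `d`, the family `(ω_h^τ)` is
summable and `ln 2 · ∑_{k=1}^d ω^{τ a_k} ≤ ln(∑_{h∈ℤ^d} ω_h^τ) ≤ M_{τ₀} · ∑_{k=1}^d ω^{τ a_k}`. -/
theorem ineq_2_3 (ω : ℝ) (hω0 : 0 < ω) (hω1 : ω < 1)
    (a b : ℕ → ℝ) (ha_pos : ∀ k, 0 < a k) (ha_mono : Monotone a)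
    (hb_pos : ∀ k, 0 < b k) (hb_star : 0 < ⨅ k, b k)
    (τ₀ : ℝ) (hτ₀ : 0 < τ₀) (τ : ℝ) (hτ : τ₀ < τ) (d : ℕ) :
    Summable (fun h : Fin d → ℤ => wfun ω a b d h ^ τ) ∧
    Real.log 2 * ∑ k ∈ Finset.range d, ω ^ (τ * a k) ≤
      Real.log (∑' h : Fin d → ℤ, wfun ω a b d h ^ τ) ∧
    Real.log (∑' h : Fin d → ℤ, wfun ω a b d h ^ τ) ≤
      (2 * ∑' j : ℕ, ω ^ (τ₀ * a 0 * (((j : ℝ) + 1) ^ (⨅ k, b k) - 1))) *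
        ∑ k ∈ Finset.range d, ω ^ (τ * a k) := by
  have hτpos : 0 < τ := hτ₀.trans hτ
  set B := ⨅ k, b k with hB
  have hBdd : BddBelow (Set.range b) := ⟨0, by rintro x ⟨k, rfl⟩; exact (hb_pos k).le⟩
  have hBle : ∀ k, B ≤ b k := fun k => ciInf_le hBdd k
  have hc₀pos : 0 < τ₀ * a 0 := mul_pos hτ₀ (ha_pos 0)
  set G : Fin d → ℤ → ℝ := fun k n => ω ^ (τ * a k.1 * |(n : ℝ)| ^ (b k.1)) with hG
  have hGpos : ∀ k n, 0 ≤ G k n := fun k n => Real.rpow_nonneg hω0.le _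
  have hcpos : ∀ k : Fin d, 0 < τ * a k.1 := fun k => mul_pos hτpos (ha_pos k.1)
  have hGsum : ∀ k, Summable (G k) := fun k =>
    aux_int_summable hω0 hω1 (hcpos k) (hb_pos k.1)
  obtain ⟨hs, ht⟩ := pi_prod_tsum d G hGpos hGsum
  have hFeq : (fun h : Fin d → ℤ => wfun ω a b d h ^ τ) = fun h => ∏ k, G k (h k) := by
    funext h
    rw [wfun, ← Real.rpow_mul hω0.le, korSum, Finset.sum_mul, Real.rpow_sum_of_pos hω0]
    refine Finset.prod_congr rfl fun k _ => ?_
    simp only [hG]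
    congr 1
    ring
  rw [hFeq, ht]
  have hper : ∀ k : Fin d,
      0 < (∑' n : ℤ, ω ^ (τ * a k.1 * |(n : ℝ)| ^ (b k.1))) ∧
      Real.log 2 * ω ^ (τ * a k.1) ≤
        Real.log (∑' n : ℤ, ω ^ (τ * a k.1 * |(n : ℝ)| ^ (b k.1))) ∧
      Real.log (∑' n : ℤ, ω ^ (τ * a k.1 * |(n : ℝ)| ^ (b k.1))) ≤
        (2 * ∑' j : ℕ, ω ^ (τ₀ * a 0 * (((j : ℝ) + 1) ^ B - 1))) * ω ^ (τ * a k.1) :=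
    fun k => per_coord hω0 hω1 (hcpos k) (hb_pos k.1) hb_star (hBle k.1) hc₀pos
      (mul_le_mul hτ.le (ha_mono (Nat.zero_le k.1)) (ha_pos 0).le hτpos.le)
  have hlogprod : Real.log (∏ k : Fin d, ∑' n : ℤ, G k n) =
      ∑ k : Fin d, Real.log (∑' n : ℤ, G k n) :=
    Real.log_prod (fun k _ => (hper k).1.ne')
  rw [hlogprod]
  refine ⟨hs, ?_, ?_⟩
  · rw [← Fin.sum_univ_eq_sum_range (fun k => ω ^ (τ * a k)) d, Finset.mul_sum]
    exact Finset.sum_le_sum fun k _ => (hper k).2.1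
  · rw [← Fin.sum_univ_eq_sum_range (fun k => ω ^ (τ * a k)) d, Finset.mul_sum]
    exact Finset.sum_le_sum fun k _ => (hper k).2.2
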